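/- Define the specialised signum function sgn : ℝ → ℝ by sgn(s) = 1 for s ≥ 0 and sgn(s) = −1 for s < 0, and for t = (t₁, t₂, t₃) ∈ ℝ³ define orth(t) = (sgn(t₁)·|t₃|, sgn(t₂)·|t₃|, −sgn(t₃)·|t₁| − sgn(t₃)·|t₂|). Then for every t ∈ ℝ³ the Euclidean norms satisfy ‖t‖ ≤ ‖orth(t)‖ ≤ √2 · ‖t‖. -/

import Mathlib

/-- The specialised signum function: `sgn s = 1` for `s ≥ 0` and `-1` for `s < 0`. -/
noncomputable def sgn (s : ℝ) : ℝ := if 0 ≤ s then 1 else -1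

/-- The algorithmic orthogonal-vector formula
`orth t = (sgn t₁ |t₃|, sgn t₂ |t₃|, − sgn t₃ |t₁| − sgn t₃ |t₂|)`. -/
noncomputable def orth (t : EuclideanSpace ℝ (Fin 3)) : EuclideanSpace ℝ (Fin 3) :=
  WithLp.toLp 2 ![sgn (t 0) * |t 2|, sgn (t 1) * |t 2|, -(sgn (t 2) * |t 0|) - sgn (t 2) * |t 1|]

lemma sgn_sq (s : ℝ) : sgn s ^ 2 = 1 := by
  unfold sgn; split <;> norm_num

/-- The Euclidean norms satisfy `‖t‖ ≤ ‖orth t‖ ≤ √2 ‖t‖` for every `t ∈ ℝ³`. -/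
theorem norm_le_norm_orth_le_sqrt_two_mul_norm (t : EuclideanSpace ℝ (Fin 3)) :
    ‖t‖ ≤ ‖orth t‖ ∧ ‖orth t‖ ≤ Real.sqrt 2 * ‖t‖ := by
  have hA : ‖t‖ ^ 2 = (t 0) ^ 2 + (t 1) ^ 2 + (t 2) ^ 2 := by
    rw [EuclideanSpace.norm_eq, Real.sq_sqrt (by positivity)]
    simp [Fin.sum_univ_three, sq_abs]
  have hB : ‖orth t‖ ^ 2 = 2 * (t 2) ^ 2 + (|t 0| + |t 1|) ^ 2 := by
    rw [EuclideanSpace.norm_eq, Real.sq_sqrt (by positivity)]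
    simp only [Fin.sum_univ_three, orth, Real.norm_eq_abs, sq_abs]
    have h0 := sgn_sq (t 0)
    have h1 := sgn_sq (t 1)
    have h2 := sgn_sq (t 2)
    simp only [Matrix.cons_val_zero, Matrix.cons_val_one, Matrix.head_cons,
      Matrix.cons_val_two, Matrix.tail_cons]
    ring_nf
    rw [h0, h1, h2]
    nlinarith [sq_abs (t 2)]
  have hAB : ‖t‖ ^ 2 ≤ ‖orth t‖ ^ 2 := by
    rw [hA, hB]
    nlinarith [sq_abs (t 0), sq_abs (t 1), abs_nonneg (t 0), abs_nonneg (t 1),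
      mul_nonneg (abs_nonneg (t 0)) (abs_nonneg (t 1)), sq_nonneg (t 2)]
  have hBA : ‖orth t‖ ^ 2 ≤ 2 * ‖t‖ ^ 2 := by
    rw [hA, hB]
    nlinarith [sq_abs (t 0), sq_abs (t 1), sq_nonneg (|t 0| - |t 1|)]
  constructor
  · have h := Real.sqrt_le_sqrt hAB
    rwa [Real.sqrt_sq (norm_nonneg _), Real.sqrt_sq (norm_nonneg _)] at h
  · have h := Real.sqrt_le_sqrt hBA
    rwa [Real.sqrt_sq (norm_nonneg _), Real.sqrt_mul (by norm_num),
      Real.sqrt_sq (norm_nonneg _)] at h
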